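/- Let d ≥ 1 and let e, k ∈ E be signed unit vectors with k ≠ e. Then P_k(H_{{e}} < ∞) ≤ P_k(H_{{0}} < ∞): the probability that the simple random walk started at k ever visits e is at most the probability that it ever visits the origin. -/
import Mathlib


open scoped Classical
noncomputable section

/-- `v` is one of the `2d` signed unit vectors of `ℤ^d`. -/
def IsUnitVec {d : ℕ} (v : Fin d → ℤ) : Prop := ∑ k, |v k| = 1

/-- The steps of a simple random walk, indexed by a direction and a sign:
`step (i, true) = e_i` and `step (i, false) = -e_i`. -/
def step {d : ℕ} (e : Fin d × Bool) : Fin d → ℤ :=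
  fun k => if k = e.1 then (if e.2 then 1 else -1) else 0

/-- The position after `m` steps of the walk started at `k` following the word `ω`. -/
def walkPos {d : ℕ} (k : Fin d → ℤ) {M : ℕ} (ω : Fin M → Fin d × Bool) (m : ℕ) :
    Fin d → ℤ :=
  k + ∑ j : Fin M, if (j : ℕ) < m then step (ω j) else 0

/-- `P_k(H_Λ < ∞)`: the probability that the simple random walk on `ℤ^d` started at `k`
visits `Λ` at some time `m ≥ 1`.  Since the steps are independent and uniform on the
`2d` signed unit vectors, this equals the supremum over finite horizons `M` of the
fraction of the `(2d)^M` equiprobable step words of length `M` whose walk visits `Λ`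
by time `M`. -/
def hitProb {d : ℕ} (k : Fin d → ℤ) (Λ : Set (Fin d → ℤ)) : ℝ :=
  ⨆ M : ℕ,
    ((Finset.univ.filter fun ω : Fin M → Fin d × Bool =>
        ∃ m, 1 ≤ m ∧ m ≤ M ∧ walkPos k ω m ∈ Λ).card : ℝ) / (2 * d) ^ M


open Finset

namespace SRWAux

variable {d : ℕ}

lemma step_apply (v : Fin d × Bool) (i : Fin d) :
    step v i = if i = v.1 then (if v.2 then 1 else -1) else 0 := rfl

lemma step_inj : Function.Injective (step : Fin d × Bool → Fin d → ℤ) := by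
  rintro ⟨a, sa⟩ ⟨b, sb⟩ h
  have h1 := congrFun h a
  have h2 := congrFun h b
  simp [step_apply] at h1 h2
  by_cases hab : a = b
  · subst hab
    simp at h1
    cases sa <;> cases sb <;> simp_all <;> omega
  · rw [if_neg hab] at h1
    cases sa <;> simp_all

lemma step_ne_zero (v : Fin d × Bool) : step v ≠ 0 := by
  intro h
  have := congrFun h v.1
  simp [step_apply] at this
  cases hv : v.2 <;> rw [hv] at this <;> omega

def flipd (v : Fin d × Bool) : Fin d × Bool := (v.1, !v.2)

lemma step_flipd (v : Fin d × Bool) : step (flipd v) = -step v := by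
  funext i
  simp only [step_apply, flipd, Pi.neg_apply]
  by_cases h : i = v.1 <;> cases hv : v.2 <;> simp [h]

lemma unit_exists {v : Fin d → ℤ} (hv : IsUnitVec v) : ∃ wv : Fin d × Bool, v = step wv := by
  have hnn : ∀ i, 0 ≤ |v i| := fun i => abs_nonneg _
  have hex : ∃ i, v i ≠ 0 := by
    by_contra h
    push_neg at h
    unfold IsUnitVec at hv
    simp [h] at hv
  obtain ⟨i, hi⟩ := hex
  have h1 : |v i| = 1 := by
    have hle : |v i| ≤ 1 := hv ▸ Finset.single_le_sum (fun j _ => hnn j) (mem_univ i)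
    have hge : (1:ℤ) ≤ |v i| := Int.one_le_abs hi
    omega
  have h0 : ∀ j, j ≠ i → v j = 0 := by
    intro j hj
    have he : |v i| + ∑ l ∈ univ.erase i, |v l| = 1 := by
      rw [Finset.add_sum_erase univ (fun l => |v l|) (mem_univ i)]; exact hv
    have hz : ∑ l ∈ univ.erase i, |v l| = 0 := by omega
    have := (Finset.sum_eq_zero_iff_of_nonneg (fun l _ => hnn l)).mp hz j (by simp [hj])
    exact abs_eq_zero.mp this
  refine ⟨(i, 0 < v i), ?_⟩
  funext j
  by_cases hj : j = i
  · subst hj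
    rcases (abs_eq (by norm_num : (0:ℤ) ≤ 1)).mp h1 with h | h <;>
      simp [step_apply, h] <;> norm_num
  · simp [step_apply, h0 j hj, hj]

lemma isUnitVec_step (v : Fin d × Bool) : IsUnitVec (step v) := by
  unfold IsUnitVec
  rw [Finset.sum_eq_single v.1]
  · cases hv : v.2 <;> simp [step_apply, hv]
  · intro j _ hj; simp [step_apply, hj]
  · simp

lemma sum_cast_zmod2 {v : Fin d → ℤ} (hv : IsUnitVec v) :
    (∑ i, ((v i : ZMod 2))) = 1 := by
  have : ∀ i, ((|v i| : ℤ) : ZMod 2) = ((v i : ℤ) : ZMod 2) := by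
    intro i
    rcases abs_choice (v i) with h | h
    · rw [h]
    · rw [h]; push_cast; rw [CharTwo.neg_eq]
  calc (∑ i, ((v i : ZMod 2))) = ∑ i, ((|v i| : ℤ) : ZMod 2) := by
        exact Finset.sum_congr rfl fun i _ => (this i).symm
    _ = ((∑ i, |v i| : ℤ) : ZMod 2) := by push_cast; ring
    _ = 1 := by rw [hv]; norm_num

lemma k_ne_neighbor {e k : Fin d → ℤ} (he : IsUnitVec e) (hk : IsUnitVec k)
    (hne : k ≠ e) (w : Fin d × Bool) : k ≠ e + step w := by
  intro h
  have h1 : (∑ i, ((k i : ZMod 2))) = (∑ i, ((e i : ZMod 2))) + ∑ i, ((step w i : ZMod 2)) := by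
    rw [← Finset.sum_add_distrib]
    refine Finset.sum_congr rfl fun i _ => ?_
    have := congrFun h i
    rw [this, Pi.add_apply]; push_cast; ring
  rw [sum_cast_zmod2 hk, sum_cast_zmod2 he, sum_cast_zmod2 (isUnitVec_step w)] at h1
  exact absurd h1 (by decide)

end SRWAux
namespace SRWAux

variable {d : ℕ}

/-- Walk along an infinite word. -/
def W (k : Fin d → ℤ) (ω : ℕ → Fin d × Bool) (m : ℕ) : Fin d → ℤ :=
  k + ∑ j ∈ Finset.range m, step (ω j)

lemma W_congr {k : Fin d → ℤ} {ω ω' : ℕ → Fin d × Bool} {m : ℕ}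
    (h : ∀ j < m, ω j = ω' j) : W k ω m = W k ω' m := by
  unfold W
  congr 1
  exact Finset.sum_congr rfl fun j hj => by rw [h j (mem_range.mp hj)]

lemma W_add (k : Fin d → ℤ) (ω : ℕ → Fin d × Bool) (t m : ℕ) :
    W k ω (t + m) = W k ω t + ∑ j ∈ Finset.range m, step (ω (t + j)) := by
  unfold W
  rw [Finset.sum_range_add, add_assoc]

/-- Extension of a finite word by a default letter. -/
def extd (w0 : Fin d × Bool) {M : ℕ} (ω : Fin M → Fin d × Bool) : ℕ → Fin d × Bool :=
  fun j => if h : j < M then ω ⟨j, h⟩ else w0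

lemma extd_lt (w0 : Fin d × Bool) {M : ℕ} (ω : Fin M → Fin d × Bool) {j : ℕ} (h : j < M) :
    extd w0 ω j = ω ⟨j, h⟩ := dif_pos h

lemma walkPos_eq_W (w0 : Fin d × Bool) {M : ℕ} (ω : Fin M → Fin d × Bool)
    {m : ℕ} (hm : m ≤ M) (k : Fin d → ℤ) :
    walkPos k ω m = W k (extd w0 ω) m := by
  unfold walkPos W
  congr 1
  calc ∑ j : Fin M, (if (j : ℕ) < m then step (ω j) else 0)
      = ∑ j ∈ Finset.range M, (if j < m then step (extd w0 ω j) else 0) := by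
        rw [← Fin.sum_univ_eq_sum_range (fun j => if j < m then step (extd w0 ω j) else 0) M]
        refine Finset.sum_congr rfl fun j _ => ?_
        rw [extd_lt w0 ω j.isLt]
    _ = ∑ j ∈ Finset.range m, (if j < m then step (extd w0 ω j) else 0) := by
        refine (Finset.sum_subset (Finset.range_subset_range.mpr hm) ?_).symm
        intro x _ hx
        rw [if_neg (by simpa using hx)]
    _ = ∑ j ∈ Finset.range m, step (extd w0 ω j) :=
        Finset.sum_congr rfl fun j hj => if_pos (mem_range.mp hj)

lemma walkPos_zero {M : ℕ} (ω : Fin M → Fin d × Bool) (k : Fin d → ℤ) :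
    walkPos k ω 0 = k := by
  unfold walkPos
  simp

lemma walkPos_succ {M : ℕ} (ω : Fin M → Fin d × Bool) (k : Fin d → ℤ) {m : ℕ} (hm : m < M) :
    walkPos k ω (m + 1) = walkPos k ω m + step (ω ⟨m, hm⟩) := by
  rw [walkPos_eq_W (ω ⟨m, hm⟩) ω (show m + 1 ≤ M from hm) k,
    walkPos_eq_W (ω ⟨m, hm⟩) ω (le_of_lt hm) k]
  unfold W
  rw [Finset.sum_range_succ, extd_lt _ ω hm, add_assoc]

lemma walkPos_prefix (w0 : Fin d × Bool) {M t : ℕ} (ht : t ≤ M) (ω : Fin M → Fin d × Bool)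
    {j : ℕ} (hj : j ≤ t) (k : Fin d → ℤ) :
    walkPos k (fun i : Fin t => ω (Fin.castLE ht i)) j = walkPos k ω j := by
  rw [walkPos_eq_W w0 _ hj k, walkPos_eq_W w0 ω (hj.trans ht) k]
  refine W_congr fun l hl => ?_
  have hlt : l < t := lt_of_lt_of_le hl hj
  rw [extd_lt w0 _ hlt, extd_lt w0 ω (lt_of_lt_of_le hlt ht)]
  rfl

/-! ### The signed-permutation acting on letters -/

def sgn (b : Fin d) (c : Bool) : Fin d → ℤ := fun i => if i = b then (if c then -1 else 1) else 1

lemma sgn_ne_zero (b : Fin d) (c : Bool) (i : Fin d) : sgn b c i ≠ 0 := by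
  unfold sgn
  by_cases h : i = b <;> cases c <;> simp [h]

def pmap (a b : Fin d) (c : Bool) (x : Fin d → ℤ) : Fin d → ℤ :=
  fun i => sgn b c i * x (Equiv.swap a b i)

lemma pmap_inj (a b : Fin d) (c : Bool) : Function.Injective (pmap a b c) := by
  intro x y h
  funext j
  have := congrFun h (Equiv.swap a b j)
  unfold pmap at this
  rw [Equiv.swap_apply_self] at this
  exact mul_left_cancel₀ (sgn_ne_zero b c _) this

lemma pmap_sum {I : Type*} (a b : Fin d) (c : Bool) (T : Finset I) (f : I → Fin d → ℤ) :
    pmap a b c (∑ j ∈ T, f j) = ∑ j ∈ T, pmap a b c (f j) := by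
  funext i
  simp [pmap, Finset.sum_apply, Finset.mul_sum]

lemma pmap_neg (a b : Fin d) (c : Bool) (x : Fin d → ℤ) :
    pmap a b c (-x) = -pmap a b c x := by
  funext i
  simp [pmap]

def actE (a b : Fin d) (c : Bool) : (Fin d × Bool) ≃ (Fin d × Bool) where
  toFun v := (Equiv.swap a b v.1, if Equiv.swap a b v.1 = b then xor c v.2 else v.2)
  invFun v := (Equiv.swap a b v.1, if v.1 = b then xor c v.2 else v.2)
  left_inv v := by
    obtain ⟨i, x⟩ := v
    simp only [Equiv.swap_apply_self]
    by_cases h : Equiv.swap a b i = b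
    · simp only [h, if_pos rfl]
      cases c <;> cases x <;> rfl
    · simp only [if_neg h]
  right_inv v := by
    obtain ⟨i, x⟩ := v
    simp only [Equiv.swap_apply_self]
    by_cases h : i = b
    · simp only [h, if_pos rfl]
      cases c <;> cases x <;> rfl
    · simp only [if_neg h]

lemma pmap_step (a b : Fin d) (c : Bool) (v : Fin d × Bool) :
    pmap a b c (step v) = step (actE a b c v) := by
  funext i
  simp only [pmap, step_apply, actE, Equiv.coe_fn_mk]
  by_cases h : i = Equiv.swap a b v.1
  · subst h
    rw [if_pos (Equiv.swap_apply_self a b v.1), if_pos rfl]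
    by_cases hb : Equiv.swap a b v.1 = b
    · simp only [sgn, if_pos hb]
      cases c <;> cases hv : v.2 <;> norm_num
    · simp only [sgn, if_neg hb]
      ring
  · have h' : Equiv.swap a b i ≠ v.1 := by
      intro hc
      exact h (by rw [← hc, Equiv.swap_apply_self])
    rw [if_neg h', if_neg h, mul_zero]

def actW (wk w : Fin d × Bool) : (Fin d × Bool) ≃ (Fin d × Bool) :=
  actE w.1 wk.1 (xor w.2 wk.2)

lemma actW_self (wk w : Fin d × Bool) : actW wk w w = wk := by
  obtain ⟨a, s⟩ := w
  obtain ⟨b, sb⟩ := wk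
  simp only [actW, actE, Equiv.coe_fn_mk, Equiv.swap_apply_left, if_pos rfl]
  cases s <;> cases sb <;> rfl

lemma pmap_actW_step (wk w v : Fin d × Bool) :
    pmap w.1 wk.1 (xor w.2 wk.2) (step v) = step (actW wk w v) := pmap_step _ _ _ v

end SRWAux
namespace SRWAux

variable {d : ℕ}

/-- The transformed suffix of a word after time `t`. -/
def sfx (wk : Fin d × Bool) (t : ℕ) (w : Fin d × Bool) {M : ℕ}
    (ω : Fin M → Fin d × Bool) : Fin (M - t) → Fin d × Bool :=
  fun j => actW wk w (ω ⟨t + (j : ℕ), by omega⟩)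

lemma suffix_hit_iff {k e : Fin d → ℤ} {wk w : Fin d × Bool} (hkw : k = step wk)
    {M t : ℕ} (ht : t ≤ M) (ω : Fin M → Fin d × Bool)
    (hz : walkPos k ω t = e + step w) {m : ℕ} (hm : m ≤ M - t) :
    walkPos k ω (t + m) = e ↔ walkPos k (sfx wk t w ω) m = 0 := by
  set S : Fin d → ℤ := ∑ j ∈ Finset.range m, step (extd w ω (t + j)) with hS
  have hL : walkPos k ω (t + m) = (e + step w) + S := by
    rw [walkPos_eq_W w ω (by omega : t + m ≤ M) k, W_add, ← walkPos_eq_W w ω ht k, hz]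
  have hR : walkPos k (sfx wk t w ω) m
      = k + pmap w.1 wk.1 (xor w.2 wk.2) S := by
    rw [walkPos_eq_W wk (sfx wk t w ω) hm k]
    unfold W
    rw [hS, pmap_sum]
    congr 1
    refine Finset.sum_congr rfl fun j hj => ?_
    have hjm : j < m := mem_range.mp hj
    have htj : t + j < M := by omega
    rw [extd_lt wk _ (lt_of_lt_of_le hjm hm), pmap_actW_step, extd_lt w ω htj]
    rfl
  rw [hL, hR]
  constructor
  · intro h
    have hSw : S = -step w := by linear_combination h
    rw [hSw, pmap_neg, pmap_actW_step, actW_self, ← hkw]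
    abel
  · intro h
    rw [hkw] at h
    have hpm : pmap w.1 wk.1 (xor w.2 wk.2) S = -step wk := by linear_combination h
    have hSw : S = -step w := by
      apply pmap_inj w.1 wk.1 (xor w.2 wk.2)
      rw [hpm, pmap_neg, pmap_actW_step, actW_self]
    rw [hSw]
    abel

end SRWAux
namespace SRWAux

variable {d : ℕ}

/-- Prefix condition: the walk first visits the neighborhood of `e` at time `t`,
at the neighbor `e + step w`. -/
def PCond (k e : Fin d → ℤ) (w : Fin d × Bool) (t : ℕ) {L : ℕ}
    (ω : Fin L → Fin d × Bool) : Prop :=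
  (∀ j, 1 ≤ j → j < t → ¬ ∃ w' : Fin d × Bool, walkPos k ω j = e + step w') ∧
    walkPos k ω t = e + step w

lemma PCond_prefix (k e : Fin d → ℤ) (w : Fin d × Bool) {M t : ℕ} (ht : t ≤ M)
    (ω : Fin M → Fin d × Bool) :
    PCond k e w t (fun i : Fin t => ω (Fin.castLE ht i)) ↔ PCond k e w t ω := by
  unfold PCond
  have hw : ∀ j, j ≤ t → walkPos k (fun i : Fin t => ω (Fin.castLE ht i)) j = walkPos k ω j :=
    fun j hj => walkPos_prefix w ht ω hj k
  constructor
  · rintro ⟨h1, h2⟩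
    exact ⟨fun j hj1 hjt => (hw j (le_of_lt hjt)) ▸ h1 j hj1 hjt, (hw t le_rfl) ▸ h2⟩
  · rintro ⟨h1, h2⟩
    exact ⟨fun j hj1 hjt => (hw j (le_of_lt hjt)) ▸ h1 j hj1 hjt, (hw t le_rfl) ▸ h2⟩

/-- Glue a prefix and a (transformed) suffix back into a word. -/
def glue (wk w : Fin d × Bool) (t : ℕ) {M : ℕ}
    (p : (Fin t → Fin d × Bool) × (Fin (M - t) → Fin d × Bool)) : Fin M → Fin d × Bool :=
  fun i => if h : (i : ℕ) < t then p.1 ⟨i, h⟩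
    else (actW wk w).symm (p.2 ⟨(i : ℕ) - t, by omega⟩)

lemma sfx_glue (wk w : Fin d × Bool) {M t : ℕ} (ht : t ≤ M)
    (p : (Fin t → Fin d × Bool) × (Fin (M - t) → Fin d × Bool)) :
    sfx wk t w (glue wk w t p) = p.2 := by
  funext j
  have hj := j.isLt
  unfold sfx glue
  rw [dif_neg (by omega : ¬ (t + (j : ℕ) < t))]
  rw [Equiv.apply_symm_apply]
  refine congrArg p.2 (Fin.ext ?_)
  show t + (j : ℕ) - t = (j : ℕ)
  omega

lemma pfx_glue (wk w : Fin d × Bool) {M t : ℕ} (ht : t ≤ M)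
    (p : (Fin t → Fin d × Bool) × (Fin (M - t) → Fin d × Bool)) :
    (fun i : Fin t => glue wk w t p (Fin.castLE ht i)) = p.1 := by
  funext i
  unfold glue
  rw [dif_pos (by simpa using i.isLt : ((Fin.castLE ht i : Fin M) : ℕ) < t)]
  exact congrArg p.1 (Fin.ext rfl)

lemma glue_eq (wk w : Fin d × Bool) {M t : ℕ} (ht : t ≤ M) (ω : Fin M → Fin d × Bool) :
    glue wk w t (fun i : Fin t => ω (Fin.castLE ht i), sfx wk t w ω) = ω := by
  funext i
  unfold glue sfx
  by_cases h : (i : ℕ) < t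
  · rw [dif_pos h]
    exact congrArg ω (Fin.ext rfl)
  · rw [dif_neg h]
    rw [Equiv.symm_apply_apply]
    refine congrArg ω (Fin.ext ?_)
    show t + ((i : ℕ) - t) = (i : ℕ)
    omega

/-- The key factorization: words satisfying the prefix condition at time `t` together
with a condition on the transformed suffix are counted by a product. -/
lemma split_card (k e : Fin d → ℤ) (w wk : Fin d × Bool) {M t : ℕ} (ht : t ≤ M)
    (R : (Fin (M - t) → Fin d × Bool) → Prop) :
    (Finset.univ.filter fun ω : Fin M → Fin d × Bool =>
        PCond k e w t ω ∧ R (sfx wk t w ω)).card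
      = (Finset.univ.filter fun σ : Fin t → Fin d × Bool => PCond k e w t σ).card *
        (Finset.univ.filter R).card := by
  rw [← Finset.card_product]
  refine Finset.card_bij'
    (fun ω _ => ((fun i : Fin t => ω (Fin.castLE ht i)), sfx wk t w ω))
    (fun p _ => glue wk w t p) ?_ ?_ ?_ ?_
  · intro ω hω
    rw [Finset.mem_filter] at hω
    rw [Finset.mem_product, Finset.mem_filter, Finset.mem_filter]
    exact ⟨⟨Finset.mem_univ _, (PCond_prefix k e w ht ω).mpr hω.2.1⟩,
      ⟨Finset.mem_univ _, hω.2.2⟩⟩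
  · intro p hp
    rw [Finset.mem_product, Finset.mem_filter, Finset.mem_filter] at hp
    rw [Finset.mem_filter]
    refine ⟨Finset.mem_univ _, ?_, ?_⟩
    · rw [← PCond_prefix k e w ht, pfx_glue wk w ht p]
      exact hp.1.2
    · rw [sfx_glue wk w ht p]
      exact hp.2.2
  · intro ω _
    exact glue_eq wk w ht ω
  · intro p _
    exact Prod.ext (pfx_glue wk w ht p) (sfx_glue wk w ht p)

end SRWAux
namespace SRWAux

variable {d : ℕ}

lemma PCond_unique {k e : Fin d → ℤ} {L t t' : ℕ} {w w' : Fin d × Bool}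
    (ω : Fin L → Fin d × Bool) (ht : 1 ≤ t) (ht' : 1 ≤ t')
    (h : PCond k e w t ω) (h' : PCond k e w' t' ω) : t = t' ∧ w = w' := by
  have htt : t = t' := by
    by_contra hnett
    rcases Nat.lt_or_ge t t' with hlt | hge
    · exact h'.1 t ht hlt ⟨w, h.2⟩
    · exact h.1 t' ht' (by omega) ⟨w', h'.2⟩
  subst htt
  refine ⟨rfl, step_inj ?_⟩
  have := h.2.symm.trans h'.2
  exact add_left_cancel this

lemma cover {k e : Fin d → ℤ} {wk : Fin d × Bool} (hkw : k = step wk)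
    (hknb : ∀ w : Fin d × Bool, k ≠ e + step w)
    {M : ℕ} (ω : Fin M → Fin d × Bool)
    (hω : ∃ m, 1 ≤ m ∧ m ≤ M ∧ walkPos k ω m = e) :
    ∃ t ∈ Finset.Ico 1 M, ∃ w : Fin d × Bool,
      PCond k e w t ω ∧
        ∃ m', 1 ≤ m' ∧ m' ≤ M - t ∧ walkPos k (sfx wk t w ω) m' = 0 := by
  obtain ⟨m, hm1, hmM, hme⟩ := hω
  have hm2 : 2 ≤ m := by
    by_contra h
    have hm : m = 1 := by omega
    subst hm
    have h0 : walkPos k ω 1 = walkPos k ω 0 + step (ω ⟨0, by omega⟩) :=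
      walkPos_succ ω k (by omega)
    rw [walkPos_zero] at h0
    apply hknb (flipd (ω ⟨0, by omega⟩))
    rw [step_flipd]
    rw [h0] at hme
    linear_combination hme
  have hnbr : ∀ m', 2 ≤ m' → m' ≤ M → walkPos k ω m' = e →
      ∃ w' : Fin d × Bool, walkPos k ω (m' - 1) = e + step w' := by
    intro m' h2 hM' he'
    have hlt : m' - 1 < M := by omega
    have hstep := walkPos_succ ω k hlt
    rw [show m' - 1 + 1 = m' by omega] at hstep
    refine ⟨flipd (ω ⟨m' - 1, hlt⟩), ?_⟩
    rw [step_flipd]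
    rw [hstep] at he'
    linear_combination he'
  classical
  set J := (Finset.Ico 1 M).filter
    (fun j => ∃ w' : Fin d × Bool, walkPos k ω j = e + step w') with hJ
  have hmem : m - 1 ∈ J := by
    rw [hJ, Finset.mem_filter, Finset.mem_Ico]
    exact ⟨⟨by omega, by omega⟩, hnbr m hm2 hmM hme⟩
  have hJne : J.Nonempty := ⟨m - 1, hmem⟩
  set t := J.min' hJne with htdef
  have htJ : t ∈ J := J.min'_mem hJne
  rw [hJ, Finset.mem_filter, Finset.mem_Ico] at htJ
  obtain ⟨⟨ht1, htM⟩, w, hw⟩ := htJ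
  have hfirst : ∀ j, 1 ≤ j → j < t → ¬ ∃ w' : Fin d × Bool, walkPos k ω j = e + step w' := by
    intro j hj1 hjt hex
    have hjJ : j ∈ J := by
      rw [hJ, Finset.mem_filter, Finset.mem_Ico]
      exact ⟨⟨hj1, by omega⟩, hex⟩
    have := J.min'_le j hjJ
    omega
  have htm : t < m := by
    rcases lt_trichotomy m t with hlt | heq | hgt
    · have := J.min'_le (m - 1) hmem
      omega
    · exfalso
      apply step_ne_zero w
      rw [← heq] at hw
      rw [hme] at hw
      linear_combination - hw
    · exact hgt
  refine ⟨t, by rw [Finset.mem_Ico]; exact ⟨ht1, htM⟩, w, ⟨hfirst, hw⟩, m - t, by omega, by omega, ?_⟩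
  have := (suffix_hit_iff hkw (by omega : t ≤ M) ω hw (show m - t ≤ M - t by omega)).mp
  rw [show t + (m - t) = m by omega] at this
  exact this hme

end SRWAux
namespace SRWAux

variable {d : ℕ}

lemma card_words (d L : ℕ) :
    (Finset.univ : Finset (Fin L → Fin d × Bool)).card = (2 * d) ^ L := by
  rw [Finset.card_univ, Fintype.card_fun]
  simp [Fintype.card_prod]
  ring

lemma perM_bound {k e : Fin d → ℤ} {wk : Fin d × Bool} (hkw : k = step wk)
    (hknb : ∀ w : Fin d × Bool, k ≠ e + step w) {c : ℝ} (hc0 : 0 ≤ c)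
    (hH0 : ∀ L : ℕ, ((Finset.univ.filter fun τ : Fin L → Fin d × Bool =>
        ∃ m, 1 ≤ m ∧ m ≤ L ∧ walkPos k τ m ∈ ({0} : Set (Fin d → ℤ))).card : ℝ)
        ≤ c * (2 * d) ^ L)
    (M : ℕ) :
    ((Finset.univ.filter fun ω : Fin M → Fin d × Bool =>
        ∃ m, 1 ≤ m ∧ m ≤ M ∧ walkPos k ω m ∈ ({e} : Set (Fin d → ℤ))).card : ℝ)
      ≤ c * (2 * d) ^ M := by
  classical
  set T := (Finset.Ico 1 M) ×ˢ (Finset.univ : Finset (Fin d × Bool)) with hT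
  have hT1 : ∀ p ∈ T, 1 ≤ p.1 ∧ p.1 < M := by
    intro p hp
    rw [hT, Finset.mem_product, Finset.mem_Ico] at hp
    exact hp.1
  -- the blocks
  have hsub : (Finset.univ.filter fun ω : Fin M → Fin d × Bool =>
        ∃ m, 1 ≤ m ∧ m ≤ M ∧ walkPos k ω m ∈ ({e} : Set (Fin d → ℤ)))
      ⊆ T.biUnion (fun p => Finset.univ.filter fun ω : Fin M → Fin d × Bool =>
          PCond k e p.2 p.1 ω ∧
          ∃ m', 1 ≤ m' ∧ m' ≤ M - p.1 ∧
            walkPos k (sfx wk p.1 p.2 ω) m' ∈ ({0} : Set (Fin d → ℤ))) := by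
    intro ω hω
    rw [Finset.mem_filter] at hω
    obtain ⟨m, hm1, hmM, hme⟩ := hω.2
    rw [Set.mem_singleton_iff] at hme
    obtain ⟨t, htT, w, hPC, m', h1, h2, h3⟩ := cover hkw hknb ω ⟨m, hm1, hmM, hme⟩
    rw [Finset.mem_biUnion]
    refine ⟨(t, w), Finset.mem_product.mpr ⟨htT, Finset.mem_univ _⟩, ?_⟩
    exact Finset.mem_filter.mpr ⟨Finset.mem_univ _, hPC, m', h1, h2, Set.mem_singleton_iff.mpr h3⟩
  have hcard1 : (Finset.univ.filter fun ω : Fin M → Fin d × Bool =>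
        ∃ m, 1 ≤ m ∧ m ≤ M ∧ walkPos k ω m ∈ ({e} : Set (Fin d → ℤ))).card
      ≤ ∑ p ∈ T, (Finset.univ.filter fun ω : Fin M → Fin d × Bool =>
          PCond k e p.2 p.1 ω ∧
          ∃ m', 1 ≤ m' ∧ m' ≤ M - p.1 ∧
            walkPos k (sfx wk p.1 p.2 ω) m' ∈ ({0} : Set (Fin d → ℤ))).card :=
    le_trans (Finset.card_le_card hsub) Finset.card_biUnion_le
  have hBsplit : ∀ p ∈ T, (Finset.univ.filter fun ω : Fin M → Fin d × Bool =>
          PCond k e p.2 p.1 ω ∧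
          ∃ m', 1 ≤ m' ∧ m' ≤ M - p.1 ∧
            walkPos k (sfx wk p.1 p.2 ω) m' ∈ ({0} : Set (Fin d → ℤ))).card
      = (Finset.univ.filter fun σ : Fin p.1 → Fin d × Bool => PCond k e p.2 p.1 σ).card *
        (Finset.univ.filter fun τ : Fin (M - p.1) → Fin d × Bool =>
          ∃ m', 1 ≤ m' ∧ m' ≤ M - p.1 ∧ walkPos k τ m' ∈ ({0} : Set (Fin d → ℤ))).card := by
    intro p hp
    exact split_card k e p.2 wk (le_of_lt (hT1 p hp).2)
      (fun τ => ∃ m', 1 ≤ m' ∧ m' ≤ M - p.1 ∧ walkPos k τ m' ∈ ({0} : Set (Fin d → ℤ)))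
  have hCsplit : ∀ p ∈ T, (Finset.univ.filter fun ω : Fin M → Fin d × Bool =>
          PCond k e p.2 p.1 ω ∧ True).card
      = (Finset.univ.filter fun σ : Fin p.1 → Fin d × Bool => PCond k e p.2 p.1 σ).card *
        (2 * d) ^ (M - p.1) := by
    intro p hp
    have h := split_card k e p.2 wk (le_of_lt (hT1 p hp).2)
      (fun _ : Fin (M - p.1) → Fin d × Bool => True)
    rw [Finset.filter_true, card_words] at h
    convert h using 3
  have hCdisj : ∀ p ∈ T, ∀ q ∈ T, p ≠ q →
      Disjoint (Finset.univ.filter fun ω : Fin M → Fin d × Bool => PCond k e p.2 p.1 ω ∧ True)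
        (Finset.univ.filter fun ω : Fin M → Fin d × Bool => PCond k e q.2 q.1 ω ∧ True) := by
    intro p hp q hq hpq
    rw [Finset.disjoint_left]
    intro ω hωp hωq
    rw [Finset.mem_filter] at hωp hωq
    obtain ⟨htt, hww⟩ := PCond_unique ω (hT1 p hp).1 (hT1 q hq).1 hωp.2.1 hωq.2.1
    exact hpq (Prod.ext htt hww)
  have hAsum : ∑ p ∈ T, (Finset.univ.filter fun σ : Fin p.1 → Fin d × Bool =>
        PCond k e p.2 p.1 σ).card * (2 * d) ^ (M - p.1) ≤ (2 * d) ^ M := by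
    calc ∑ p ∈ T, (Finset.univ.filter fun σ : Fin p.1 → Fin d × Bool =>
          PCond k e p.2 p.1 σ).card * (2 * d) ^ (M - p.1)
        = ∑ p ∈ T, (Finset.univ.filter fun ω : Fin M → Fin d × Bool =>
            PCond k e p.2 p.1 ω ∧ True).card :=
          Finset.sum_congr rfl fun p hp => (hCsplit p hp).symm
      _ = (T.biUnion fun p => Finset.univ.filter fun ω : Fin M → Fin d × Bool =>
            PCond k e p.2 p.1 ω ∧ True).card := (Finset.card_biUnion hCdisj).symm
      _ ≤ (2 * d) ^ M := le_trans (Finset.card_le_univ _) (le_of_eq (card_words d M))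
  calc ((Finset.univ.filter fun ω : Fin M → Fin d × Bool =>
        ∃ m, 1 ≤ m ∧ m ≤ M ∧ walkPos k ω m ∈ ({e} : Set (Fin d → ℤ))).card : ℝ)
      ≤ ∑ p ∈ T, (((Finset.univ.filter fun ω : Fin M → Fin d × Bool =>
          PCond k e p.2 p.1 ω ∧
          ∃ m', 1 ≤ m' ∧ m' ≤ M - p.1 ∧
            walkPos k (sfx wk p.1 p.2 ω) m' ∈ ({0} : Set (Fin d → ℤ))).card : ℕ) : ℝ) := by
        exact_mod_cast hcard1
    _ ≤ ∑ p ∈ T, ((Finset.univ.filter fun σ : Fin p.1 → Fin d × Bool =>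
          PCond k e p.2 p.1 σ).card : ℝ) * (c * (2 * d) ^ (M - p.1)) := by
        refine Finset.sum_le_sum fun p hp => ?_
        rw [hBsplit p hp]
        push_cast
        exact mul_le_mul_of_nonneg_left (hH0 (M - p.1)) (Nat.cast_nonneg _)
    _ = c * ∑ p ∈ T, ((Finset.univ.filter fun σ : Fin p.1 → Fin d × Bool =>
          PCond k e p.2 p.1 σ).card : ℝ) * (2 * d) ^ (M - p.1) := by
        rw [Finset.mul_sum]
        exact Finset.sum_congr rfl fun p _ => by ring
    _ ≤ c * (2 * d) ^ M := by
        refine mul_le_mul_of_nonneg_left ?_ hc0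
        calc ∑ p ∈ T, ((Finset.univ.filter fun σ : Fin p.1 → Fin d × Bool =>
              PCond k e p.2 p.1 σ).card : ℝ) * (2 * d) ^ (M - p.1)
            = ((∑ p ∈ T, (Finset.univ.filter fun σ : Fin p.1 → Fin d × Bool =>
              PCond k e p.2 p.1 σ).card * (2 * d) ^ (M - p.1) : ℕ) : ℝ) := by
              push_cast
              ring
          _ ≤ (((2 * d) ^ M : ℕ) : ℝ) := by exact_mod_cast hAsum
          _ = (2 * (d : ℝ)) ^ M := by push_cast; ring

end SRWAux

/-- **Appendix, step (i).**  For signed unit vectors `k ≠ e`, the probability that the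
simple random walk started at `k` ever visits `e` is at most the probability that it
ever visits the origin. -/
theorem hitProb_neighbor_le_hitProb_origin
    {d : ℕ} (hd : 1 ≤ d) (e k : Fin d → ℤ)
    (he : IsUnitVec e) (hk : IsUnitVec k) (hne : k ≠ e) :
    hitProb k ({e} : Set (Fin d → ℤ)) ≤ hitProb k ({0} : Set (Fin d → ℤ)) := by
  classical
  obtain ⟨wk, hkw⟩ := SRWAux.unit_exists hk
  have hknb := SRWAux.k_ne_neighbor he hk hne
  have hdpos : (0:ℝ) < (d:ℝ) := by
    have : 0 < d := hd
    exact_mod_cast this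
  have hpow : ∀ L : ℕ, (0:ℝ) < (2 * (d:ℝ)) ^ L := fun L => pow_pos (by linarith) L
  have hc : hitProb k ({0} : Set (Fin d → ℤ))
      = ⨆ L : ℕ, ((Finset.univ.filter fun τ : Fin L → Fin d × Bool =>
          ∃ m, 1 ≤ m ∧ m ≤ L ∧ walkPos k τ m ∈ ({0} : Set (Fin d → ℤ))).card : ℝ)
          / (2 * (d:ℝ)) ^ L := rfl
  have hF1 : ∀ L : ℕ, ((Finset.univ.filter fun τ : Fin L → Fin d × Bool =>
          ∃ m, 1 ≤ m ∧ m ≤ L ∧ walkPos k τ m ∈ ({0} : Set (Fin d → ℤ))).card : ℝ)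
          / (2 * (d:ℝ)) ^ L ≤ 1 := by
    intro L
    rw [div_le_one (hpow L)]
    have h1 : (Finset.univ.filter fun τ : Fin L → Fin d × Bool =>
        ∃ m, 1 ≤ m ∧ m ≤ L ∧ walkPos k τ m ∈ ({0} : Set (Fin d → ℤ))).card ≤ (2 * d) ^ L :=
      le_trans (Finset.card_filter_le _ _) (le_of_eq (SRWAux.card_words d L))
    calc ((Finset.univ.filter fun τ : Fin L → Fin d × Bool =>
          ∃ m, 1 ≤ m ∧ m ≤ L ∧ walkPos k τ m ∈ ({0} : Set (Fin d → ℤ))).card : ℝ)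
        ≤ (((2 * d) ^ L : ℕ) : ℝ) := by exact_mod_cast h1
      _ = (2 * (d:ℝ)) ^ L := by push_cast; ring
  have hbdd : BddAbove (Set.range fun L : ℕ =>
      ((Finset.univ.filter fun τ : Fin L → Fin d × Bool =>
          ∃ m, 1 ≤ m ∧ m ≤ L ∧ walkPos k τ m ∈ ({0} : Set (Fin d → ℤ))).card : ℝ)
          / (2 * (d:ℝ)) ^ L) := by
    refine ⟨1, ?_⟩
    rintro x ⟨L, rfl⟩
    exact hF1 L
  have hle : ∀ L : ℕ, ((Finset.univ.filter fun τ : Fin L → Fin d × Bool =>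
          ∃ m, 1 ≤ m ∧ m ≤ L ∧ walkPos k τ m ∈ ({0} : Set (Fin d → ℤ))).card : ℝ)
          / (2 * (d:ℝ)) ^ L ≤ hitProb k ({0} : Set (Fin d → ℤ)) := by
    intro L
    rw [hc]
    exact le_ciSup hbdd L
  have hc0 : 0 ≤ hitProb k ({0} : Set (Fin d → ℤ)) :=
    le_trans (div_nonneg (Nat.cast_nonneg _) (le_of_lt (hpow 0))) (hle 0)
  have hH0 : ∀ L : ℕ, ((Finset.univ.filter fun τ : Fin L → Fin d × Bool =>
          ∃ m, 1 ≤ m ∧ m ≤ L ∧ walkPos k τ m ∈ ({0} : Set (Fin d → ℤ))).card : ℝ)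
          ≤ hitProb k ({0} : Set (Fin d → ℤ)) * (2 * (d:ℝ)) ^ L := by
    intro L
    exact (div_le_iff₀ (hpow L)).mp (hle L)
  rw [show hitProb k ({e} : Set (Fin d → ℤ))
      = ⨆ M : ℕ, ((Finset.univ.filter fun ω : Fin M → Fin d × Bool =>
          ∃ m, 1 ≤ m ∧ m ≤ M ∧ walkPos k ω m ∈ ({e} : Set (Fin d → ℤ))).card : ℝ)
          / (2 * (d:ℝ)) ^ M from rfl]
  refine ciSup_le fun M => ?_
  rw [div_le_iff₀ (hpow M)]
  exact SRWAux.perM_bound hkw hknb hc0 hH0 M
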